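/- Let h ≥ 2, let f : ℤ → ℕ∞ have f⁻¹(0) finite, and let φ : ℕ → ℝ be nonnegative with φ(x) → ∞. Then there exist infinitely many sets A of integers such that the restricted representation function r̂_{A,h}(n), counting h-element subsets of A summing to n, equals f(n) for all n ∈ ℤ, and A(−x,x) ≤ φ(x) for all x ≥ 0. -/

import Mathlib

/-- The restricted representation function of order `h` of `A ⊆ ℤ`: the number
of `h`-element subsets of `A` with sum `n`, valued in `ℕ∞`. -/
noncomputable def restRepFn (A : Set ℤ) (h : ℕ) (n : ℤ) : ℕ∞ :=
  {S : Finset ℤ | ↑S ⊆ A ∧ S.card = h ∧ ∑ a ∈ S, a = n}.encard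

namespace SparseAux

open Finset

def Sol (h : ℕ) (A : Finset ℤ) (n : ℤ) : Finset (Finset ℤ) :=
  (A.powersetCard h).filter (fun S => ∑ a ∈ S, a = n)

def cnt (h : ℕ) (A : Finset ℤ) (n : ℤ) : ℕ := (Sol h A n).card

def SInv (h : ℕ) (f : ℤ → ℕ∞) (A : Finset ℤ) : Prop :=
  (∀ m, (cnt h A m : ℕ∞) ≤ f m) ∧
  (∀ S S' : Finset ℤ, S ⊆ A → S' ⊆ A → S.card = S'.card → S.card < h →
    ∑ a ∈ S, a = ∑ a ∈ S', a → S = S')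

lemma mem_Sol {h : ℕ} {A : Finset ℤ} {n : ℤ} {S : Finset ℤ} :
    S ∈ Sol h A n ↔ S ⊆ A ∧ S.card = h ∧ ∑ a ∈ S, a = n := by
  simp [Sol, Finset.mem_powersetCard, and_assoc]

lemma Sol_mono {h : ℕ} {A B : Finset ℤ} (hAB : A ⊆ B) (n : ℤ) :
    Sol h A n ⊆ Sol h B n := by
  intro S hS
  rw [mem_Sol] at hS ⊢
  exact ⟨hS.1.trans hAB, hS.2⟩

lemma cnt_mono {h : ℕ} {A B : Finset ℤ} (hAB : A ⊆ B) (n : ℤ) :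
    cnt h A n ≤ cnt h B n :=
  Finset.card_le_card (Sol_mono hAB n)

lemma geom3 (m : ℕ) : 3 * ∑ j ∈ range m, (4:ℤ)^(j+1) = 4^(m+1) - 4 := by
  induction m with
  | zero => simp
  | succ m ih => rw [Finset.sum_range_succ, mul_add, ih, pow_succ]; ring

lemma sep (D : ℤ) (hD : 0 < D) (v : ℕ → ℤ) (hv : ∀ i, |v i| ≤ 2)
    (m j : ℕ) (hj : j < m) (hvj : v j ≠ 0) :
    4*D ≤ |∑ i ∈ range m, v i * (D * 4^(i+1))| := by
  induction m with
  | zero => omega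
  | succ m ih =>
    by_cases hm : v m = 0
    · rw [Finset.sum_range_succ, hm, zero_mul, add_zero]
      have hjm : j < m := by
        rcases Nat.lt_succ_iff_lt_or_eq.mp hj with h' | h'
        · exact h'
        · exact absurd (h' ▸ hm) hvj
      exact ih hjm
    · have habs : |∑ i ∈ range m, v i * (D * 4^(i+1))|
          ≤ 2 * (D * ∑ i ∈ range m, (4:ℤ)^(i+1)) := by
        calc |∑ i ∈ range m, v i * (D * 4^(i+1))|
            ≤ ∑ i ∈ range m, |v i * (D * 4^(i+1))| := Finset.abs_sum_le_sum_abs _ _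
          _ ≤ ∑ i ∈ range m, 2 * (D * 4^(i+1)) := by
              apply Finset.sum_le_sum
              intro i _
              rw [abs_mul]
              have h4 : (0:ℤ) < D * 4^(i+1) := by positivity
              rw [abs_of_pos h4]
              exact mul_le_mul_of_nonneg_right (hv i) h4.le
          _ = 2 * (D * ∑ i ∈ range m, (4:ℤ)^(i+1)) := by
              rw [Finset.mul_sum, Finset.mul_sum]
      have hlast : D * 4^(m+1) ≤ |v m * (D * 4^(m+1))| := by
        rw [abs_mul]
        have h1 : (1:ℤ) ≤ |v m| := Int.one_le_abs hm
        have h4 : (0:ℤ) < D * 4^(m+1) := by positivity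
        rw [abs_of_pos h4]
        nlinarith
      have hg := geom3 m
      have hpow : (4:ℤ) ≤ 4^(m+1) := by
        calc (4:ℤ) = 4^1 := by norm_num
        _ ≤ 4^(m+1) := pow_le_pow_right₀ (by norm_num) (by omega)
      rw [Finset.sum_range_succ]
      have this1 := abs_sub_abs_le_abs_sub (v m * (D * 4^(m+1)))
        (-(∑ i ∈ range m, v i * (D * 4^(i+1))))
      rw [abs_neg, sub_neg_eq_add] at this1
      have hcomm : |v m * (D * 4^(m+1)) + ∑ i ∈ range m, v i * (D * 4^(i+1))|
          = |∑ i ∈ range m, v i * (D * 4^(i+1)) + v m * (D * 4^(m+1))| := by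
        rw [add_comm]
      rw [hcomm] at this1
      have hsum4 : (0:ℤ) ≤ ∑ i ∈ range m, (4:ℤ)^(i+1) := by
        apply Finset.sum_nonneg; intro i _; positivity
      nlinarith [abs_nonneg (∑ i ∈ range m, v i * (D * 4^(i+1)))]


lemma extend (h : ℕ) (hh : 2 ≤ h) (f : ℤ → ℕ∞) (hf : (f ⁻¹' {0}).Finite)
    (A : Finset ℤ) (hA : SInv h f A) (n : ℤ)
    (hn : (cnt h A n : ℕ∞) < f n) (t : ℕ) :
    ∃ B : Finset ℤ, A ⊆ B ∧ SInv h f B ∧ B.card ≤ A.card + h ∧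
      cnt h B n = cnt h A n + 1 ∧ ∀ a ∈ B, a ∉ A → (t : ℤ) < |a| := by
  classical
  obtain ⟨F0, hF0⟩ : ∃ F0 : Finset ℤ, ∀ m, f m = 0 → m ∈ F0 :=
    ⟨hf.toFinset, fun m hm => hf.mem_toFinset.mpr hm⟩
  set K : ℤ := 1 + (t:ℤ) + |n| + ∑ a ∈ A ∪ F0, |a| with hKdef
  have hsumnn : (0:ℤ) ≤ ∑ a ∈ A ∪ F0, |a| :=
    Finset.sum_nonneg (fun a _ => abs_nonneg a)
  have hKabs : ∀ a ∈ A ∪ F0, |a| ≤ K := by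
    intro a ha
    have h1 : |a| ≤ ∑ a ∈ A ∪ F0, |a| :=
      Finset.single_le_sum (fun i _ => abs_nonneg i) ha
    have h2 : (0:ℤ) ≤ (t:ℤ) := Int.ofNat_nonneg t
    have h3 : (0:ℤ) ≤ |n| := abs_nonneg n
    omega
  have hKA : ∀ a ∈ A, |a| ≤ K := fun a ha => hKabs a (Finset.mem_union_left _ ha)
  have hKF : ∀ m, f m = 0 → |m| ≤ K :=
    fun m hm => hKabs m (Finset.mem_union_right _ (hF0 m hm))
  have hKn : |n| ≤ K := by
    have h2 : (0:ℤ) ≤ (t:ℤ) := Int.ofNat_nonneg t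
    omega
  have hKt : (t:ℤ) < K := by
    have h3 : (0:ℤ) ≤ |n| := abs_nonneg n
    omega
  have hK1 : 1 ≤ K := by
    have h2 : (0:ℤ) ≤ (t:ℤ) := Int.ofNat_nonneg t
    have h3 : (0:ℤ) ≤ |n| := abs_nonneg n
    omega
  set BB : ℤ := ((h:ℤ)+1)*K with hBBdef
  have hh3 : (3:ℤ) ≤ (h:ℤ)+1 := by exact_mod_cast by omega
  have hBB3 : 3*K ≤ BB := mul_le_mul_of_nonneg_right hh3 (by omega)
  have hKBB : K ≤ BB := by nlinarith
  set D : ℤ := 2*BB+1 with hDdef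
  have hD : 0 < D := by omega
  have hsub_bound : ∀ S : Finset ℤ, S ⊆ A → S.card ≤ h → |∑ a ∈ S, a| ≤ (h:ℤ)*K := by
    intro S hS hcard
    calc |∑ a ∈ S, a| ≤ ∑ a ∈ S, |a| := Finset.abs_sum_le_sum_abs _ _
      _ ≤ ∑ _a ∈ S, K := Finset.sum_le_sum (fun a ha => hKA a (hS ha))
      _ = (S.card : ℤ) * K := by rw [Finset.sum_const, nsmul_eq_mul]
      _ ≤ (h:ℤ)*K := by
          apply mul_le_mul_of_nonneg_right _ (by omega)
          exact_mod_cast hcard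
  have hhK_BB : (h:ℤ)*K ≤ BB := by nlinarith
  -- the new elements
  set c : ℕ → ℤ := fun i => if i = h-1 then n - ∑ j ∈ range (h-1), D*4^(j+1)
    else D*4^(i+1) with hcdef
  have hGnn : ∀ j ∈ range (h-1), (0:ℤ) ≤ D*4^(j+1) := by
    intro j _; positivity
  have hGlb : 4*D ≤ ∑ j ∈ range (h-1), D*4^(j+1) := by
    have h0 : 0 ∈ range (h-1) := by simp; omega
    have := Finset.single_le_sum hGnn h0
    norm_num at this
    linarith
  have hpow4 : ∀ i : ℕ, (4:ℤ) ≤ 4^(i+1) := by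
    intro i
    calc (4:ℤ) = 4^1 := by norm_num
    _ ≤ 4^(i+1) := pow_le_pow_right₀ (by norm_num) (by omega)
  have hci : ∀ i, i ≠ h-1 → c i = D*4^(i+1) := by
    intro i hi; simp only [hcdef, if_neg hi]
  have hch : c (h-1) = n - ∑ j ∈ range (h-1), D*4^(j+1) := by
    simp only [hcdef, if_pos rfl]
  have hcpos : ∀ i, i ≠ h-1 → K < c i := by
    intro i hi
    rw [hci i hi]
    have := hpow4 i
    nlinarith
  have hcneg : c (h-1) < -K := by
    rw [hch]
    have : n ≤ |n| := le_abs_self n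
    omega
  have habsbig : ∀ i, K < |c i| := by
    intro i
    by_cases hi : i = h-1
    · subst hi; rw [abs_of_neg (by omega)]; omega
    · have := hcpos i hi; rw [abs_of_pos (by omega)]; omega
  have hinj : ∀ i ∈ range h, ∀ j ∈ range h, c i = c j → i = j := by
    intro i _ j _ hij
    by_cases hi : i = h-1 <;> by_cases hj : j = h-1
    · omega
    · exfalso; have h1 := hcneg; have h2 := hcpos j hj
      rw [hi] at hij; omega
    · exfalso; have h1 := hcneg; have h2 := hcpos i hi
      rw [hj] at hij; omega
    · rw [hci i hi, hci j hj] at hij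
      have h4 : (4:ℤ)^(i+1) = 4^(j+1) := by
        have hD0 : D ≠ 0 := by omega
        exact mul_left_cancel₀ hD0 hij
      have hmono : StrictMono (fun k : ℕ => (4:ℤ)^k) :=
        fun _ _ hlt => pow_lt_pow_right₀ (by norm_num) hlt
      have := hmono.injective h4
      omega
  set C : Finset ℤ := (range h).image c with hCdef
  have hinj' : Set.InjOn c ↑(range h) := by
    intro i hi j hj hij
    exact hinj i (by simpa using hi) j (by simpa using hj) hij
  have hCcard : C.card = h := by
    rw [hCdef, Finset.card_image_of_injOn hinj', card_range]
  have hmemC : ∀ x, x ∈ C ↔ ∃ i, i < h ∧ c i = x := by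
    intro x; simp [hCdef, Finset.mem_image]
  have hCabs : ∀ x ∈ C, K < |x| := by
    intro x hx
    obtain ⟨i, _, rfl⟩ := (hmemC x).mp hx
    exact habsbig i
  have hsumC : ∑ a ∈ C, a = n := by
    rw [hCdef, Finset.sum_image (fun i hi j hj hij => hinj i hi j hj hij)]
    have hsucc : h = (h-1) + 1 := by omega
    rw [hsucc, Finset.sum_range_succ]
    have : ∀ i ∈ range (h-1), c i = D*4^(i+1) := by
      intro i hi
      exact hci i (by simp at hi; omega)
    rw [Finset.sum_congr rfl this, hch]
    ring
  have hdisjAC : ∀ a ∈ A, a ∉ C := by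
    intro a ha hc
    exact absurd (hKA a ha) (not_le.mpr (hCabs a hc))
  set B : Finset ℤ := A ∪ C with hBdef
  -- decomposition
  set Idx : Finset ℤ → Finset ℕ := fun S => (range h).filter (fun i => c i ∈ S)
    with hIdxdef
  have hIdx_sub : ∀ S, Idx S ⊆ range h := fun S => Finset.filter_subset _ _
  have hIdx_lt : ∀ S, ∀ i ∈ Idx S, i < h := by
    intro S i hi
    have := hIdx_sub S hi; simpa using this
  have hmemIdx : ∀ S i, i ∈ Idx S ↔ i < h ∧ c i ∈ S := by
    intro S i; simp [hIdxdef]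
  have hSC : ∀ S, S ∩ C = (Idx S).image c := by
    intro S
    ext x
    simp only [Finset.mem_inter, Finset.mem_image, hmemC]
    constructor
    · rintro ⟨hxS, i, hi, rfl⟩
      exact ⟨i, (hmemIdx S i).mpr ⟨hi, hxS⟩, rfl⟩
    · rintro ⟨i, hi, rfl⟩
      obtain ⟨hih, hci'⟩ := (hmemIdx S i).mp hi
      exact ⟨hci', i, hih, rfl⟩
  have hIdxinj : ∀ S, Set.InjOn c ↑(Idx S) := by
    intro S i hi j hj hij
    exact hinj i (by simpa using hIdx_lt S i (by simpa using hi)) j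
      (by simpa using hIdx_lt S j (by simpa using hj)) hij
  have hScard : ∀ S, (S ∩ C).card = (Idx S).card := by
    intro S
    rw [hSC S, Finset.card_image_of_injOn (hIdxinj S)]
  have hdec : ∀ S, S ⊆ B → ∑ a ∈ S, a = ∑ a ∈ S ∩ A, a + ∑ i ∈ Idx S, c i := by
    intro S hS
    have hsplit : S = (S ∩ A) ∪ (S ∩ C) := by
      rw [← Finset.inter_union_distrib_left]
      exact (Finset.inter_eq_left.mpr hS).symm
    have hdisj2 : Disjoint (S ∩ A) (S ∩ C) := by
      rw [Finset.disjoint_left]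
      intro a ha hc
      exact hdisjAC a (Finset.mem_of_mem_inter_right ha)
        (Finset.mem_of_mem_inter_right hc)
    calc ∑ a ∈ S, a = ∑ a ∈ (S ∩ A) ∪ (S ∩ C), a := by rw [← hsplit]
      _ = ∑ a ∈ S ∩ A, a + ∑ a ∈ S ∩ C, a := Finset.sum_union hdisj2
      _ = ∑ a ∈ S ∩ A, a + ∑ i ∈ Idx S, c i := by
          rw [hSC S, Finset.sum_image (fun i hi j hj hij => hIdxinj S hi hj hij)]
  have hval : ∀ I : Finset ℕ, I ⊆ range h →
      ∑ i ∈ I, c i =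
        (∑ i ∈ range (h-1),
          ((if i ∈ I then (1:ℤ) else 0) - (if h-1 ∈ I then 1 else 0)) * (D*4^(i+1)))
        + (if h-1 ∈ I then n else 0) := by
    intro I hI
    have hIr : ∀ i ∈ I.erase (h-1), i < h-1 := by
      intro i hi
      have h1 := Finset.mem_of_mem_erase hi
      have h2 := Finset.ne_of_mem_erase hi
      have h3 := hI h1
      simp only [Finset.mem_range] at h3
      omega
    have hsplit : ∑ i ∈ I, c i
        = ∑ i ∈ I.erase (h-1), c i + (if h-1 ∈ I then c (h-1) else 0) := by
      by_cases hmem : h-1 ∈ I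
      · rw [if_pos hmem, Finset.sum_erase_add I c hmem]
      · rw [if_neg hmem, Finset.erase_eq_of_notMem hmem, add_zero]
    have hcongr : ∑ i ∈ I.erase (h-1), c i = ∑ i ∈ I.erase (h-1), D*4^(i+1) :=
      Finset.sum_congr rfl (fun i hi => hci i (Finset.ne_of_mem_erase hi))
    have hfilter : (range (h-1)).filter (fun i => i ∈ I) = I.erase (h-1) := by
      ext i
      simp only [Finset.mem_filter, Finset.mem_range, Finset.mem_erase]
      constructor
      · rintro ⟨h1, h2⟩; exact ⟨by omega, h2⟩
      · rintro ⟨h1, h2⟩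
        have h3 := hI h2
        simp only [Finset.mem_range] at h3
        exact ⟨by omega, h2⟩
    have hsum1 : ∑ i ∈ range (h-1), (if i ∈ I then (1:ℤ) else 0) * (D*4^(i+1))
        = ∑ i ∈ I.erase (h-1), D*4^(i+1) := by
      rw [← hfilter, Finset.sum_filter]
      apply Finset.sum_congr rfl
      intro i _
      by_cases hi : i ∈ I <;> simp [hi]
    by_cases hmem : h-1 ∈ I
    · simp only [if_pos hmem]
      rw [hsplit, hcongr, if_pos hmem, hch]
      simp only [sub_mul, one_mul, Finset.sum_sub_distrib, hsum1]
      ring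
    · simp only [if_neg hmem]
      rw [hsplit, hcongr, if_neg hmem, add_zero]
      simp only [sub_mul, one_mul, zero_mul, Finset.sum_sub_distrib, hsum1,
        Finset.sum_const_zero]
      ring
  -- split / reconstruction
  have hrecon : ∀ S : Finset ℤ, S ⊆ B → (S ∩ A) ∪ (S ∩ C) = S := by
    intro S hS
    rw [← Finset.inter_union_distrib_left]
    exact Finset.inter_eq_left.mpr hS
  have hdisj2 : ∀ S : Finset ℤ, Disjoint (S ∩ A) (S ∩ C) := by
    intro S
    rw [Finset.disjoint_left]
    intro a ha hc
    exact hdisjAC a (Finset.mem_of_mem_inter_right ha)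
      (Finset.mem_of_mem_inter_right hc)
  have hcardsplit : ∀ S : Finset ℤ, S ⊆ B → (S ∩ A).card + (S ∩ C).card = S.card := by
    intro S hS
    rw [← Finset.card_union_of_disjoint (hdisj2 S), hrecon S hS]
  -- constant bound
  have hconst : ∀ S : Finset ℤ, S ⊆ B → S.card ≤ h →
      |∑ a ∈ S ∩ A, a + (if h-1 ∈ Idx S then n else 0)| ≤ BB := by
    intro S hS hcard
    have h1 : |∑ a ∈ S ∩ A, a| ≤ (h:ℤ)*K :=
      hsub_bound _ Finset.inter_subset_right
        ((Finset.card_le_card Finset.inter_subset_left).trans hcard)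
    have h2 : |(if h-1 ∈ Idx S then n else 0)| ≤ K := by
      split_ifs
      · exact hKn
      · simp; omega
    have h3 : (h:ℤ)*K + K = BB := by rw [hBBdef]; ring
    calc |∑ a ∈ S ∩ A, a + (if h-1 ∈ Idx S then n else 0)|
        ≤ |∑ a ∈ S ∩ A, a| + |(if h-1 ∈ Idx S then n else 0)| := abs_add_le _ _
      _ ≤ BB := by omega
  -- master comparison lemma
  have hmaster : ∀ S S' : Finset ℤ, S ⊆ B → S' ⊆ B → S.card ≤ h → S'.card ≤ h →
      ∑ a ∈ S, a = ∑ a ∈ S', a →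
      (Idx S = Idx S' ∧ ∑ a ∈ S ∩ A, a = ∑ a ∈ S' ∩ A, a) ∨
      (Idx S = range h ∧ Idx S' = ∅) ∨ (Idx S' = range h ∧ Idx S = ∅) := by
    intro S S' hS hS' hcS hcS' hsum
    have hES := hdec S hS
    have hES' := hdec S' hS'
    rw [hval (Idx S) (hIdx_sub S)] at hES
    rw [hval (Idx S') (hIdx_sub S')] at hES'
    have heq : ∑ i ∈ range (h-1),
          (((if i ∈ Idx S then (1:ℤ) else 0) - (if h-1 ∈ Idx S then 1 else 0))
           - ((if i ∈ Idx S' then (1:ℤ) else 0) - (if h-1 ∈ Idx S' then 1 else 0)))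
            * (D*4^(i+1))
        = (∑ a ∈ S' ∩ A, a + (if h-1 ∈ Idx S' then n else 0))
          - (∑ a ∈ S ∩ A, a + (if h-1 ∈ Idx S then n else 0)) := by
      rw [hsum] at hES
      rw [hES'] at hES
      simp only [sub_mul, Finset.sum_sub_distrib] at hES ⊢
      linarith
    have hzero : ∀ j, j < h-1 →
        ((if j ∈ Idx S then (1:ℤ) else 0) - (if h-1 ∈ Idx S then 1 else 0))
        = ((if j ∈ Idx S' then (1:ℤ) else 0) - (if h-1 ∈ Idx S' then 1 else 0)) := by
      intro j hj
      by_contra hne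
      have hsep := sep D hD
        (fun i => ((if i ∈ Idx S then (1:ℤ) else 0) - (if h-1 ∈ Idx S then 1 else 0))
           - ((if i ∈ Idx S' then (1:ℤ) else 0) - (if h-1 ∈ Idx S' then 1 else 0)))
        (by intro i; split_ifs <;> norm_num) (h-1) j hj
        (by simpa [sub_ne_zero] using hne)
      rw [heq] at hsep
      have hb1 := hconst S hS hcS
      have hb2 := hconst S' hS' hcS'
      have habs2 : |(∑ a ∈ S' ∩ A, a + (if h-1 ∈ Idx S' then n else 0))
          - (∑ a ∈ S ∩ A, a + (if h-1 ∈ Idx S then n else 0))| ≤ 2*BB := by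
        have := abs_sub (∑ a ∈ S' ∩ A, a + (if h-1 ∈ Idx S' then n else 0))
          (∑ a ∈ S ∩ A, a + (if h-1 ∈ Idx S then n else 0))
        omega
      omega
    have hconsteq : ∑ a ∈ S ∩ A, a + (if h-1 ∈ Idx S then n else 0)
        = ∑ a ∈ S' ∩ A, a + (if h-1 ∈ Idx S' then n else 0) := by
      have hz : ∑ i ∈ range (h-1),
          (((if i ∈ Idx S then (1:ℤ) else 0) - (if h-1 ∈ Idx S then 1 else 0))
           - ((if i ∈ Idx S' then (1:ℤ) else 0) - (if h-1 ∈ Idx S' then 1 else 0)))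
            * (D*4^(i+1)) = 0 := by
        apply Finset.sum_eq_zero
        intro i hi
        rw [hzero i (Finset.mem_range.mp hi)]
        ring
      rw [hz] at heq
      linarith
    by_cases e1 : h-1 ∈ Idx S <;> by_cases e2 : h-1 ∈ Idx S'
    · left
      have hmem_iff : ∀ j, j < h-1 → (j ∈ Idx S ↔ j ∈ Idx S') := by
        intro j hj
        have hz := hzero j hj
        rw [if_pos e1, if_pos e2] at hz
        by_cases h1 : j ∈ Idx S <;> by_cases h2 : j ∈ Idx S' <;>
          simp [h1, h2] at hz ⊢
      have hII : Idx S = Idx S' := by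
        ext i
        by_cases hieq : i = h-1
        · rw [hieq]; exact iff_of_true e1 e2
        · constructor
          · intro hmem
            have hih := hIdx_lt S i hmem
            exact (hmem_iff i (by omega)).mp hmem
          · intro hmem
            have hih := hIdx_lt S' i hmem
            exact (hmem_iff i (by omega)).mpr hmem
      refine ⟨hII, ?_⟩
      rw [if_pos e1, if_pos e2] at hconsteq
      linarith
    · right; left
      have hforall : ∀ j, j < h-1 → (j ∈ Idx S ∧ j ∉ Idx S') := by
        intro j hj
        have hz := hzero j hj
        rw [if_pos e1, if_neg e2] at hz
        by_cases h1 : j ∈ Idx S <;> by_cases h2 : j ∈ Idx S' <;>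
          simp [h1, h2] at hz ⊢
      constructor
      · ext i
        simp only [Finset.mem_range]
        constructor
        · intro hmem; exact hIdx_lt S i hmem
        · intro hih
          by_cases hieq : i = h-1
          · rw [hieq]; exact e1
          · exact (hforall i (by omega)).1
      · ext i
        simp only [Finset.notMem_empty, iff_false]
        intro hmem
        have hih := hIdx_lt S' i hmem
        by_cases hieq : i = h-1
        · exact e2 (hieq ▸ hmem)
        · exact (hforall i (by omega)).2 hmem
    · right; right
      have hforall : ∀ j, j < h-1 → (j ∈ Idx S' ∧ j ∉ Idx S) := by
        intro j hj
        have hz := hzero j hj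
        rw [if_neg e1, if_pos e2] at hz
        by_cases h1 : j ∈ Idx S <;> by_cases h2 : j ∈ Idx S' <;>
          simp [h1, h2] at hz ⊢
      constructor
      · ext i
        simp only [Finset.mem_range]
        constructor
        · intro hmem; exact hIdx_lt S' i hmem
        · intro hih
          by_cases hieq : i = h-1
          · rw [hieq]; exact e2
          · exact (hforall i (by omega)).1
      · ext i
        simp only [Finset.notMem_empty, iff_false]
        intro hmem
        have hih := hIdx_lt S i hmem
        by_cases hieq : i = h-1
        · exact e1 (hieq ▸ hmem)
        · exact (hforall i (by omega)).2 hmem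
    · left
      have hmem_iff : ∀ j, j < h-1 → (j ∈ Idx S ↔ j ∈ Idx S') := by
        intro j hj
        have hz := hzero j hj
        rw [if_neg e1, if_neg e2] at hz
        by_cases h1 : j ∈ Idx S <;> by_cases h2 : j ∈ Idx S' <;>
          simp [h1, h2] at hz ⊢
      have hII : Idx S = Idx S' := by
        ext i
        by_cases hieq : i = h-1
        · rw [hieq]; exact iff_of_false e1 e2
        · constructor
          · intro hmem
            have hih := hIdx_lt S i hmem
            exact (hmem_iff i (by omega)).mp hmem
          · intro hmem
            have hih := hIdx_lt S' i hmem
            exact (hmem_iff i (by omega)).mpr hmem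
      refine ⟨hII, ?_⟩
      rw [if_neg e1, if_neg e2] at hconsteq
      linarith
  -- auxiliary facts about Idx
  have hIdx_empty : ∀ S : Finset ℤ, S ⊆ B → (¬ S ⊆ A ↔ (Idx S).Nonempty) := by
    intro S hS
    constructor
    · intro hnsub
      obtain ⟨a, haS, haA⟩ := Finset.not_subset.mp hnsub
      have haC : a ∈ C := by
        have := hS haS
        rw [hBdef, Finset.mem_union] at this
        tauto
      obtain ⟨i, hih, rfl⟩ := (hmemC a).mp haC
      exact ⟨i, (hmemIdx S i).mpr ⟨hih, haS⟩⟩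
    · rintro ⟨i, hi⟩ hsub
      obtain ⟨hih, hciS⟩ := (hmemIdx S i).mp hi
      exact absurd (hKA _ (hsub hciS)) (not_le.mpr (habsbig i))
  have hfullC : ∀ S : Finset ℤ, S.card = h → Idx S = range h → S = C := by
    intro S hcard hfull
    have h1 : C ⊆ S := by
      intro x hx
      obtain ⟨i, hih, rfl⟩ := (hmemC x).mp hx
      have h2 : i ∈ Idx S := by rw [hfull]; exact Finset.mem_range.mpr hih
      exact ((hmemIdx S i).mp h2).2
    exact (Finset.eq_of_subset_of_card_le h1 (by omega)).symm
  -- mixed non-block sums are very large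
  have hmix_big : ∀ (m : ℤ) (S : Finset ℤ), S ∈ Sol h B m → (Idx S).Nonempty →
      Idx S ≠ range h → BB < |m| := by
    intro m S hSol hne hnfull
    obtain ⟨hSB, hScd, hSsum⟩ := mem_Sol.mp hSol
    have hES := hdec S hSB
    rw [hval (Idx S) (hIdx_sub S)] at hES
    have hex : ∃ j, j < h-1 ∧
        ((if j ∈ Idx S then (1:ℤ) else 0) - (if h-1 ∈ Idx S then 1 else 0)) ≠ 0 := by
      by_contra hz
      push_neg at hz
      by_cases e1 : h-1 ∈ Idx S
      · apply hnfull
        ext i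
        simp only [Finset.mem_range]
        constructor
        · intro hmem; exact hIdx_lt S i hmem
        · intro hih
          by_cases hieq : i = h-1
          · rw [hieq]; exact e1
          · have := hz i (by omega)
            rw [if_pos e1] at this
            by_cases h1 : i ∈ Idx S
            · exact h1
            · rw [if_neg h1] at this; norm_num at this
      · obtain ⟨i, hi⟩ := hne
        have hih := hIdx_lt S i hi
        have hieq : i ≠ h-1 := fun hc => e1 (hc ▸ hi)
        have := hz i (by omega)
        rw [if_pos hi, if_neg e1] at this
        norm_num at this
    obtain ⟨j, hj, huj⟩ := hex
    have hsep := sep D hD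
      (fun i => (if i ∈ Idx S then (1:ℤ) else 0) - (if h-1 ∈ Idx S then 1 else 0))
      (by intro i; split_ifs <;> norm_num) (h-1) j hj (by exact huj)
    have hrw : ∑ i ∈ range (h-1),
        ((if i ∈ Idx S then (1:ℤ) else 0) - (if h-1 ∈ Idx S then 1 else 0)) * (D*4^(i+1))
        = m - (∑ a ∈ S ∩ A, a + (if h-1 ∈ Idx S then n else 0)) := by
      rw [hSsum] at hES
      linarith
    rw [hrw] at hsep
    have hb := hconst S hSB (le_of_eq hScd)
    have htri : |m - (∑ a ∈ S ∩ A, a + (if h-1 ∈ Idx S then n else 0))|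
        ≤ |m| + |∑ a ∈ S ∩ A, a + (if h-1 ∈ Idx S then n else 0)| := abs_sub m _
    omega
  -- counting
  have hSolB : ∀ m : ℤ, cnt h B m
      = cnt h A m + ((Sol h B m).filter (fun S => ¬ S ⊆ A)).card := by
    intro m
    have hfp : (Sol h B m).filter (fun S => S ⊆ A) = Sol h A m := by
      ext S
      simp only [Finset.mem_filter, mem_Sol]
      constructor
      · rintro ⟨⟨_, h2, h3⟩, h4⟩; exact ⟨h4, h2, h3⟩
      · rintro ⟨h1, h2, h3⟩
        exact ⟨⟨h1.trans Finset.subset_union_left, h2, h3⟩, h1⟩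
    rw [cnt, cnt, ← hfp]
    exact (Finset.card_filter_add_card_filter_not _).symm
  have hCSol : C ∈ Sol h B n := mem_Sol.mpr ⟨Finset.subset_union_right, hCcard, hsumC⟩
  have hCnsub : ¬ C ⊆ A := by
    intro hsub
    have h0C : c 0 ∈ C := (hmemC (c 0)).mpr ⟨0, by omega, rfl⟩
    exact absurd (hKA _ (hsub h0C)) (not_le.mpr (habsbig 0))
  have hNew_n : (Sol h B n).filter (fun S => ¬ S ⊆ A) = {C} := by
    ext S
    simp only [Finset.mem_filter, Finset.mem_singleton]
    constructor
    · rintro ⟨hSol, hnsub⟩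
      have hne := (hIdx_empty S (mem_Sol.mp hSol).1).mp hnsub
      by_cases hfull : Idx S = range h
      · exact hfullC S (mem_Sol.mp hSol).2.1 hfull
      · exact absurd (hmix_big n S hSol hne hfull) (not_lt.mpr (hKn.trans hKBB))
    · rintro rfl
      exact ⟨hCSol, hCnsub⟩
  have hcnt_n : cnt h B n = cnt h A n + 1 := by
    rw [hSolB n, hNew_n, Finset.card_singleton]
  have hNew_big : ∀ m : ℤ, m ≠ n →
      ∀ S ∈ (Sol h B m).filter (fun S => ¬ S ⊆ A), BB < |m| := by
    intro m hm S hSf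
    obtain ⟨hSol, hnsub⟩ := Finset.mem_filter.mp hSf
    obtain ⟨hSB, hScd, hSsum⟩ := mem_Sol.mp hSol
    have hne := (hIdx_empty S hSB).mp hnsub
    by_cases hfull : Idx S = range h
    · exfalso
      have hSeq : S = C := hfullC S hScd hfull
      rw [hSeq, hsumC] at hSsum
      exact hm hSsum.symm
    · exact hmix_big m S hSol hne hfull
  have hNew_card : ∀ m : ℤ, m ≠ n →
      ((Sol h B m).filter (fun S => ¬ S ⊆ A)).card ≤ 1 := by
    intro m hm
    rw [Finset.card_le_one]
    intro S hSf S' hSf'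
    obtain ⟨hSol, hnsub⟩ := Finset.mem_filter.mp hSf
    obtain ⟨hSol', hnsub'⟩ := Finset.mem_filter.mp hSf'
    obtain ⟨hSB, hScd, hSsum⟩ := mem_Sol.mp hSol
    obtain ⟨hSB', hScd', hSsum'⟩ := mem_Sol.mp hSol'
    rcases hmaster S S' hSB hSB' hScd.le hScd'.le (hSsum.trans hSsum'.symm) with
      ⟨hI, ha⟩ | ⟨hfull, _⟩ | ⟨hfull, _⟩
    · have hSC1 : S ∩ C = S' ∩ C := by rw [hSC S, hSC S', hI]
      have hne := (hIdx_empty S hSB).mp hnsub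
      have hpos : 0 < (Idx S).card := Finset.card_pos.mpr hne
      have h1 := hcardsplit S hSB
      have h2 := hcardsplit S' hSB'
      have h3 : (S ∩ C).card = (S' ∩ C).card := by rw [hSC1]
      have h4 := hScard S
      have hcA : (S ∩ A).card = (S' ∩ A).card := by omega
      have hlt : (S ∩ A).card < h := by omega
      have hAA := hA.2 (S ∩ A) (S' ∩ A) Finset.inter_subset_right
        Finset.inter_subset_right hcA hlt ha
      calc S = (S ∩ A) ∪ (S ∩ C) := (hrecon S hSB).symm
        _ = (S' ∩ A) ∪ (S' ∩ C) := by rw [hAA, hSC1]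
        _ = S' := hrecon S' hSB'
    · exfalso
      have hSeq : S = C := hfullC S hScd hfull
      rw [hSeq, hsumC] at hSsum
      exact hm hSsum.symm
    · exfalso
      have hSeq : S' = C := hfullC S' hScd' hfull
      rw [hSeq, hsumC] at hSsum'
      exact hm hSsum'.symm
  -- Sol h A m is empty for big m
  have hSolA_empty : ∀ m : ℤ, BB < |m| → cnt h A m = 0 := by
    intro m hm
    rw [cnt, Finset.card_eq_zero]
    by_contra hne
    obtain ⟨S, hS⟩ := Finset.nonempty_iff_ne_empty.mpr hne
    obtain ⟨hSA, hScd, hSsum⟩ := mem_Sol.mp hS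
    have := hsub_bound S hSA hScd.le
    rw [hSsum] at this
    omega
  -- the new invariant
  have hSInvB : SInv h f B := by
    constructor
    · intro m
      by_cases hm : m = n
      · subst hm
        rw [hcnt_n]
        push_cast
        exact (ENat.add_one_le_iff (by exact_mod_cast ENat.coe_ne_top _)).mpr hn
      · rcases Nat.le_one_iff_eq_zero_or_eq_one.mp (hNew_card m hm) with h0 | h1
        · rw [hSolB m, h0, add_zero]
          exact hA.1 m
        · obtain ⟨S, hSf⟩ := Finset.card_eq_one.mp h1
          have hbig : BB < |m| := hNew_big m hm S (by rw [hSf]; exact Finset.mem_singleton_self _)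
          have hfne : f m ≠ 0 := by
            intro hf0
            exact absurd (hKF m hf0) (not_le.mpr (lt_of_le_of_lt hKBB hbig))
          rw [hSolB m, hSolA_empty m hbig, h1]
          norm_num
          exact ENat.one_le_iff_ne_zero.mpr hfne
    · intro S S' hSB hSB' hcd hlt hsum
      have hSB2 : S ⊆ B := hSB
      have hSB2' : S' ⊆ B := hSB'
      rcases hmaster S S' hSB2 hSB2' (by omega) (by omega) hsum with
        ⟨hI, ha⟩ | ⟨hfull, _⟩ | ⟨hfull, _⟩
      · have hSC1 : S ∩ C = S' ∩ C := by rw [hSC S, hSC S', hI]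
        have h1 := hcardsplit S hSB2
        have h2 := hcardsplit S' hSB2'
        have h3 : (S ∩ C).card = (S' ∩ C).card := by rw [hSC1]
        have hcA : (S ∩ A).card = (S' ∩ A).card := by omega
        have hltA : (S ∩ A).card < h :=
          lt_of_le_of_lt (Finset.card_le_card Finset.inter_subset_left) hlt
        have hAA := hA.2 (S ∩ A) (S' ∩ A) Finset.inter_subset_right
          Finset.inter_subset_right hcA hltA ha
        calc S = (S ∩ A) ∪ (S ∩ C) := (hrecon S hSB2).symm
          _ = (S' ∩ A) ∪ (S' ∩ C) := by rw [hAA, hSC1]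
          _ = S' := hrecon S' hSB2'
      · exfalso
        have h5 : (S ∩ C).card = h := by rw [hScard S, hfull, card_range]
        have h6 : (S ∩ C).card ≤ S.card := Finset.card_le_card Finset.inter_subset_left
        omega
      · exfalso
        have h5 : (S' ∩ C).card = h := by rw [hScard S', hfull, card_range]
        have h6 : (S' ∩ C).card ≤ S'.card := Finset.card_le_card Finset.inter_subset_left
        omega
  refine ⟨B, Finset.subset_union_left, hSInvB, ?_, hcnt_n, ?_⟩
  · calc B.card ≤ A.card + C.card := Finset.card_union_le _ _
      _ = A.card + h := by rw [hCcard]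
  · intro a haB haA
    have haC : a ∈ C := by
      have := haB
      rw [hBdef, Finset.mem_union] at this
      tauto
    exact lt_trans hKt (hCabs a haC)

lemma step (h : ℕ) (hh : 2 ≤ h) (f : ℤ → ℕ∞) (hf : (f ⁻¹' {0}).Finite)
    (A : Finset ℤ) (hA : SInv h f A) (n : ℤ) (t : ℕ) :
    ∃ B : Finset ℤ, A ⊆ B ∧ SInv h f B ∧ B.card ≤ A.card + h ∧
      (((cnt h A n : ℕ∞) < f n) → cnt h B n = cnt h A n + 1) ∧
      (∀ a ∈ B, a ∉ A → (t : ℤ) < |a|) := by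
  by_cases hn : (cnt h A n : ℕ∞) < f n
  · obtain ⟨B, h1, h2, h3, h4, h5⟩ := extend h hh f hf A hA n hn t
    exact ⟨B, h1, h2, h3, fun _ => h4, h5⟩
  · exact ⟨A, subset_rfl, hA, by omega, fun hc => absurd hc hn,
      fun a ha hna => absurd ha hna⟩

lemma sinv_empty (h : ℕ) (hh : 2 ≤ h) (f : ℤ → ℕ∞) : SInv h f ∅ := by
  constructor
  · intro m
    have hemp : Sol h ∅ m = ∅ := by
      rw [Finset.eq_empty_iff_forall_notMem]
      intro S hS
      obtain ⟨h1, h2, _⟩ := mem_Sol.mp hS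
      rw [Finset.subset_empty] at h1
      subst h1
      simp at h2
      omega
    rw [cnt, hemp]
    simp
  · intro S S' hS hS' _ _ _
    rw [Finset.subset_empty] at hS hS'
    rw [hS, hS']

lemma main (h : ℕ) (hh : 2 ≤ h) (f : ℤ → ℕ∞) (hf : (f ⁻¹' {0}).Finite)
    (φ : ℕ → ℝ) (hφ0 : ∀ x, 0 ≤ φ x)
    (hφ : Filter.Tendsto φ Filter.atTop Filter.atTop) (p : ℕ) :
    ∃ A : Set ℤ,
      (∀ n : ℤ, {S : Finset ℤ | ↑S ⊆ A ∧ S.card = h ∧ ∑ a ∈ S, a = n}.encard = f n) ∧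
      (∀ x : ℕ, {a ∈ A | |a| ≤ (x : ℤ)}.Finite ∧
        (({a ∈ A | |a| ≤ (x : ℤ)}.ncard : ℝ) ≤ φ x)) ∧
      (∀ a ∈ A, (p : ℤ) < |a|) := by
  classical
  -- thresholds from φ
  have hN : ∀ k : ℕ, ∃ M : ℕ, ∀ x, M ≤ x → ((h*(k+1) : ℕ) : ℝ) ≤ φ x := by
    intro k
    have := (hφ.eventually_ge_atTop ((h*(k+1) : ℕ) : ℝ))
    rw [Filter.eventually_atTop] at this
    obtain ⟨M, hM⟩ := this
    exact ⟨M, fun x hx => hM x hx⟩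
  choose N hNspec using hN
  -- enumeration of targets, each hit infinitely often
  set e : ℕ → ℤ := fun k => Denumerable.ofNat ℤ (Nat.unpair k).2 with hedef
  have he : ∀ (z : ℤ) (k0 : ℕ), ∃ k, k0 ≤ k ∧ e k = z := by
    intro z k0
    refine ⟨Nat.pair k0 (Encodable.encode z), Nat.left_le_pair _ _, ?_⟩
    simp [hedef, Nat.unpair_pair, Denumerable.ofNat_encode]
    exact Denumerable.ofNat_encode z
  -- monotone thresholds
  set T : ℕ → ℕ := fun k => max ((Finset.range (k+1)).sup N) (max k p) with hTdef
  have hTmono : ∀ j k, j ≤ k → T j ≤ T k := by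
    intro j k hjk
    apply max_le_max
    · apply Finset.sup_mono
      intro i hi
      simp only [Finset.mem_range] at hi ⊢
      omega
    · omega
  have hTN : ∀ k, N k ≤ T k := fun k =>
    le_trans (Finset.le_sup (by simp)) (le_max_left _ _)
  have hTk : ∀ k, k ≤ T k := fun k => le_trans (le_max_left k p) (le_max_right _ _)
  have hTp : ∀ k, p ≤ T k := fun k => le_trans (le_max_right k p) (le_max_right _ _)
  -- the chain of finite sets
  have hstep : ∀ (k : ℕ) (A : Finset ℤ), SInv h f A →
      ∃ B : Finset ℤ, A ⊆ B ∧ SInv h f B ∧ B.card ≤ A.card + h ∧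
        (((cnt h A (e k) : ℕ∞) < f (e k)) → cnt h B (e k) = cnt h A (e k) + 1) ∧
        (∀ a ∈ B, a ∉ A → ((T k : ℕ) : ℤ) < |a|) :=
    fun k A hA => step h hh f hf A hA (e k) (T k)
  let seq : ℕ → {A : Finset ℤ // SInv h f A} := fun k =>
    Nat.rec ⟨∅, sinv_empty h hh f⟩
      (fun k prev => ⟨(hstep k prev.1 prev.2).choose,
        ((hstep k prev.1 prev.2).choose_spec).2.1⟩) k
  have hseq0 : (seq 0).1 = ∅ := rfl
  have hspec : ∀ k, (seq k).1 ⊆ (seq (k+1)).1 ∧ (seq (k+1)).1.card ≤ (seq k).1.card + h ∧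
      (((cnt h (seq k).1 (e k) : ℕ∞) < f (e k)) →
        cnt h (seq (k+1)).1 (e k) = cnt h (seq k).1 (e k) + 1) ∧
      (∀ a ∈ (seq (k+1)).1, a ∉ (seq k).1 → ((T k : ℕ) : ℤ) < |a|) := by
    intro k
    obtain ⟨h1, _, h3, h4, h5⟩ := (hstep k (seq k).1 (seq k).2).choose_spec
    exact ⟨h1, h3, h4, h5⟩
  have hmono : ∀ j k, j ≤ k → (seq j).1 ⊆ (seq k).1 := by
    intro j k hjk
    induction k with
    | zero =>
      have hj0 : j = 0 := by omega
      subst hj0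
      exact subset_rfl
    | succ k ih =>
      by_cases hjeq : j = k+1
      · subst hjeq; exact subset_rfl
      · exact (ih (by omega)).trans (hspec k).1
  have hcard : ∀ k, (seq k).1.card ≤ h * k := by
    intro k
    induction k with
    | zero => rw [hseq0]; simp
    | succ k ih =>
      have := (hspec k).2.1
      have h2 : h * (k+1) = h * k + h := by ring
      omega
  have hbig : ∀ k l, k ≤ l → ∀ a ∈ (seq l).1, a ∉ (seq k).1 → ((T k : ℕ) : ℤ) < |a| := by
    intro k l hkl
    induction l with
    | zero =>
      intro a ha _
      have hk0 : k = 0 := by omega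
      rw [hseq0] at ha
      simp at ha
    | succ l ih =>
      intro a ha hna
      by_cases hkeq : k = l+1
      · exact absurd (hkeq ▸ ha) hna
      · have hkl' : k ≤ l := by omega
        by_cases hal : a ∈ (seq l).1
        · exact ih hkl' a hal hna
        · have h1 := (hspec l).2.2.2 a ha hal
          have h2 := hTmono k l hkl'
          have h3 : ((T k : ℕ) : ℤ) ≤ ((T l : ℕ) : ℤ) := by exact_mod_cast h2
          omega
  -- the limit set
  set Aset : Set ℤ := ⋃ k, ((seq k).1 : Set ℤ) with hAdef
  have hmem : ∀ a : ℤ, a ∈ Aset ↔ ∃ k, a ∈ (seq k).1 := by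
    intro a
    simp [hAdef, Set.mem_iUnion]
  have hfin_sub : ∀ S : Finset ℤ, ↑S ⊆ Aset → ∃ k, S ⊆ (seq k).1 := by
    intro S
    induction S using Finset.induction_on with
    | empty => exact fun _ => ⟨0, by simp⟩
    | @insert a S ha ih =>
      intro hsub
      have hS : ↑S ⊆ Aset := by
        intro x hx
        exact hsub (by simp [hx])
      obtain ⟨k1, hk1⟩ := ih hS
      have haA : a ∈ Aset := hsub (by simp)
      obtain ⟨k2, hk2⟩ := (hmem a).mp haA
      refine ⟨max k1 k2, Finset.insert_subset (hmono k2 _ (le_max_right _ _) hk2)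
        (hk1.trans (hmono k1 _ (le_max_left _ _)))⟩
  -- counts reach every value below f n
  have hreach : ∀ (n : ℤ) (j : ℕ), (j : ℕ∞) ≤ f n → ∃ k, j ≤ cnt h (seq k).1 n := by
    intro n j
    induction j with
    | zero => exact fun _ => ⟨0, Nat.zero_le _⟩
    | succ j ih =>
      intro hj
      have hj' : (j : ℕ∞) ≤ f n := by
        refine le_trans ?_ hj
        exact_mod_cast Nat.le_succ j
      obtain ⟨k, hk⟩ := ih hj'
      obtain ⟨k', hkk', hek'⟩ := he n k
      have hck' : j ≤ cnt h (seq k').1 n := le_trans hk (cnt_mono (hmono k k' hkk') n)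
      by_cases hcase : j + 1 ≤ cnt h (seq k').1 n
      · exact ⟨k', hcase⟩
      · have hjeq : cnt h (seq k').1 n = j := by omega
        have hlt : (cnt h (seq k').1 n : ℕ∞) < f n := by
          rw [hjeq]
          refine lt_of_lt_of_le ?_ hj
          exact_mod_cast Nat.lt_succ_self j
        have hinc := (hspec k').2.2.1
        rw [hek'] at hinc
        exact ⟨k'+1, by rw [hinc hlt, hjeq]⟩
  -- counts never exceed f n
  have hle : ∀ (n : ℤ) (k : ℕ), (cnt h (seq k).1 n : ℕ∞) ≤ f n := fun n k => (seq k).2.1 n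
  -- representation function equality
  have hrep : ∀ n : ℤ,
      {S : Finset ℤ | ↑S ⊆ Aset ∧ S.card = h ∧ ∑ a ∈ S, a = n}.encard = f n := by
    intro n
    have hsolsub : ∀ k : ℕ, ↑(Sol h (seq k).1 n) ⊆
        {S : Finset ℤ | ↑S ⊆ Aset ∧ S.card = h ∧ ∑ a ∈ S, a = n} := by
      intro k S hS
      obtain ⟨h1, h2, h3⟩ := mem_Sol.mp (Finset.mem_coe.mp hS)
      refine ⟨?_, h2, h3⟩
      intro x hx
      exact (hmem x).mpr ⟨k, h1 hx⟩
    rcases eq_or_ne (f n) ⊤ with htop | hne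
    · rw [htop]
      apply Set.Infinite.encard_eq
      by_contra hninf
      rw [Set.not_infinite] at hninf
      have hbound : ∀ k, cnt h (seq k).1 n ≤ hninf.toFinset.card := by
        intro k
        apply Finset.card_le_card
        intro S hS
        rw [Set.Finite.mem_toFinset]
        exact hsolsub k hS
      obtain ⟨k, hk⟩ := hreach n (hninf.toFinset.card + 1) (htop ▸ le_top)
      have := hbound k
      omega
    · obtain ⟨cval, hcval⟩ : ∃ c : ℕ, (c : ℕ∞) = f n := by
        lift f n to ℕ using hne with c hc
        exact ⟨c, rfl⟩
      obtain ⟨k0, hk0⟩ := hreach n cval (le_of_eq hcval)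
      have hk0' : cnt h (seq k0).1 n = cval := by
        have h1 := hle n k0
        rw [← hcval] at h1
        have h2 : cnt h (seq k0).1 n ≤ cval := by
          rwa [Nat.cast_le (α := ℕ∞)] at h1
        omega
      have hseteq : {S : Finset ℤ | ↑S ⊆ Aset ∧ S.card = h ∧ ∑ a ∈ S, a = n}
          = ↑(Sol h (seq k0).1 n) := by
        apply Set.Subset.antisymm
        · rintro S ⟨hsub, hcd, hsum⟩
          obtain ⟨k1, hk1⟩ := hfin_sub S hsub
          have hSk : S ∈ Sol h (seq (max k0 k1)).1 n :=
            mem_Sol.mpr ⟨hk1.trans (hmono k1 _ (le_max_right _ _)), hcd, hsum⟩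
          have hsub2 : Sol h (seq k0).1 n ⊆ Sol h (seq (max k0 k1)).1 n :=
            Sol_mono (hmono k0 _ (le_max_left _ _)) n
          have hcle : cnt h (seq (max k0 k1)).1 n ≤ cval := by
            have h1 := hle n (max k0 k1)
            rw [← hcval] at h1
            rwa [Nat.cast_le (α := ℕ∞)] at h1
          have heq2 : Sol h (seq k0).1 n = Sol h (seq (max k0 k1)).1 n := by
            apply Finset.eq_of_subset_of_card_le hsub2
            have : cnt h (seq (max k0 k1)).1 n ≤ cnt h (seq k0).1 n := by omega
            exact this
          rw [Finset.mem_coe, heq2]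
          exact hSk
        · exact hsolsub k0
      rw [hseteq, Set.encard_coe_eq_coe_finsetCard,
        show (Sol h (seq k0).1 n).card = cnt h (seq k0).1 n from rfl, hk0', hcval]
  -- sparsity
  have hsparse : ∀ x : ℕ, {a ∈ Aset | |a| ≤ (x:ℤ)}.Finite ∧
      (({a ∈ Aset | |a| ≤ (x:ℤ)}.ncard : ℝ) ≤ φ x) := by
    intro x
    have hex : ∃ k, x ≤ T k := ⟨x, hTk x⟩
    set k0 := Nat.find hex with hk0def
    have hk0 : x ≤ T k0 := Nat.find_spec hex
    have hsub : {a ∈ Aset | |a| ≤ (x:ℤ)} ⊆ ↑((seq k0).1) := by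
      rintro a ⟨haA, hax⟩
      obtain ⟨l, hl⟩ := (hmem a).mp haA
      rw [Finset.mem_coe]
      by_contra hna
      have hlk : k0 ≤ l := by
        by_contra hlk
        push_neg at hlk
        exact hna (hmono l k0 (by omega) hl)
      have h1 := hbig k0 l hlk a hl hna
      have h2 : ((T k0 : ℕ) : ℤ) < (x : ℤ) := by omega
      have h3 : (x : ℤ) ≤ ((T k0 : ℕ) : ℤ) := by exact_mod_cast hk0
      omega
    have hfin : {a ∈ Aset | |a| ≤ (x:ℤ)}.Finite :=
      Set.Finite.subset ((seq k0).1.finite_toSet) hsub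
    refine ⟨hfin, ?_⟩
    have hcard1 : {a ∈ Aset | |a| ≤ (x:ℤ)}.ncard ≤ (seq k0).1.card := by
      have := Set.ncard_le_ncard hsub ((seq k0).1.finite_toSet)
      rwa [Set.ncard_coe_finset] at this
    have hcard2 := hcard k0
    rcases Nat.eq_zero_or_pos k0 with h0 | hpos
    · have : {a ∈ Aset | |a| ≤ (x:ℤ)}.ncard = 0 := by
        rw [h0] at hcard1
        rw [hseq0] at hcard1
        simpa using hcard1
      rw [this]
      simpa using hφ0 x
    · set j := k0 - 1 with hjdef
      have hjx : ¬ (x ≤ T j) := Nat.find_min hex (by omega)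
      have hNj : N j ≤ x := by
        have := hTN j
        omega
      have hφx := hNspec j x hNj
      have hk0j : k0 = j + 1 := by omega
      have hcard3 : {a ∈ Aset | |a| ≤ (x:ℤ)}.ncard ≤ h * (j+1) :=
        le_trans hcard1 (hk0j ▸ hcard2)
      calc ({a ∈ Aset | |a| ≤ (x:ℤ)}.ncard : ℝ) ≤ ((h*(j+1) : ℕ) : ℝ) := by
            exact_mod_cast hcard3
        _ ≤ φ x := hφx
  refine ⟨Aset, hrep, hsparse, ?_⟩
  intro a ha
  obtain ⟨l, hl⟩ := (hmem a).mp ha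
  have h1 := hbig 0 l (Nat.zero_le l) a hl (by rw [hseq0]; simp)
  have h2 : (p : ℤ) ≤ ((T 0 : ℕ) : ℤ) := by exact_mod_cast hTp 0
  omega

end SparseAux

/-- Theorem 2: for `h ≥ 2`, `f : ℤ → ℕ∞` with `f⁻¹(0)` finite and nonnegative
`φ : ℕ → ℝ` with `φ(x) → ∞`, there are infinitely many sets `A ⊆ ℤ` with
restricted representation function `r̂_{A,h} = f` and `A(−x,x) ≤ φ(x)`. -/
theorem infinitely_many_sparse_restricted_bases (h : ℕ) (hh : 2 ≤ h)
    (f : ℤ → ℕ∞) (hf : (f ⁻¹' {0}).Finite)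
    (φ : ℕ → ℝ) (hφ0 : ∀ x, 0 ≤ φ x)
    (hφ : Filter.Tendsto φ Filter.atTop Filter.atTop) :
    {A : Set ℤ |
      (∀ n : ℤ, restRepFn A h n = f n) ∧
      (∀ x : ℕ, {a ∈ A | |a| ≤ (x : ℤ)}.Finite ∧
        (({a ∈ A | |a| ≤ (x : ℤ)}.ncard : ℝ) ≤ φ x))}.Infinite := by
  classical
  have hmain : ∀ p : ℕ, ∃ A : Set ℤ, A ∈ {A : Set ℤ |
      (∀ n : ℤ, restRepFn A h n = f n) ∧
      (∀ x : ℕ, {a ∈ A | |a| ≤ (x : ℤ)}.Finite ∧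
        (({a ∈ A | |a| ≤ (x : ℤ)}.ncard : ℝ) ≤ φ x))} ∧ ∀ a ∈ A, (p:ℤ) < |a| := by
    intro p
    obtain ⟨A, h1, h2, h3⟩ := SparseAux.main h hh f hf φ hφ0 hφ p
    refine ⟨A, ⟨?_, h2⟩, h3⟩
    intro n
    rw [restRepFn]
    exact h1 n
  have hnonempty : ∀ A : Set ℤ, (∀ n : ℤ, restRepFn A h n = f n) → A.Nonempty := by
    intro A hA
    obtain ⟨n, hn⟩ : ∃ n : ℤ, f n ≠ 0 := by
      by_contra hz
      push_neg at hz
      have hsub : (Set.univ : Set ℤ) ⊆ f ⁻¹' {0} := fun n _ => hz n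
      exact Set.infinite_univ (hf.subset hsub)
    have hrep := hA n
    rw [restRepFn] at hrep
    have hne : {S : Finset ℤ | ↑S ⊆ A ∧ S.card = h ∧ ∑ a ∈ S, a = n}.Nonempty := by
      rw [Set.nonempty_iff_ne_empty]
      intro hemp
      rw [hemp, Set.encard_empty] at hrep
      exact hn hrep.symm
    obtain ⟨S, hS⟩ := hne
    have hSne : S.Nonempty := Finset.card_pos.mp (by
      have := hS.2.1
      omega)
    obtain ⟨a, haS⟩ := hSne
    exact ⟨a, hS.1 haS⟩
  by_contra hinf
  rw [Set.not_infinite] at hinf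
  set g : Set ℤ → ℤ := fun A => if hA : A.Nonempty then hA.choose else 0 with hgdef
  have hg : ∀ A : Set ℤ, A.Nonempty → g A ∈ A := by
    intro A hA
    simp only [hgdef, dif_pos hA]
    exact hA.choose_spec
  set P : ℕ := (hinf.toFinset.image (fun A => (g A).natAbs)).sup id with hPdef
  obtain ⟨A0, hA0mem, hA0big⟩ := hmain P
  have h1 : g A0 ∈ A0 := hg A0 (hnonempty A0 hA0mem.1)
  have h2 := hA0big (g A0) h1
  have h3 : (g A0).natAbs ≤ P := by
    have hmem' : (g A0).natAbs ∈ hinf.toFinset.image (fun A => (g A).natAbs) :=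
      Finset.mem_image.mpr ⟨A0, hinf.mem_toFinset.mpr hA0mem, rfl⟩
    exact Finset.le_sup (f := id) hmem'
  have h4 : ((g A0).natAbs : ℤ) = |g A0| := (Int.abs_eq_natAbs _).symm
  rw [← h4] at h2
  have h5 : ((g A0).natAbs : ℤ) ≤ (P : ℤ) := by exact_mod_cast h3
  omega
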